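/- The Hamiltonian H^ε(q,p,Q,P) := p²/2 + V(q) + (ε/4)(tr(P^*P) + tr(Q Q^* D²V(q))) is conserved along solutions of the system q̇ = p, ṗ = −∂_q(V(q) + ε V^{(1)}(q,Q)), Q̇ = P, Ṗ = −D²V(q)Q, where V^{(1)}(q,Q) = ¼ tr(Q Q^* D²V(q)). -/

import Mathlib

open scoped Matrix BigOperators

noncomputable section

/-- The Hessian `D²V(q)_{ij}`. -/
def D2V {d : ℕ} (V : EuclideanSpace ℝ (Fin d) → ℝ) (q : EuclideanSpace ℝ (Fin d))
    (i j : Fin d) : ℝ :=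
  iteratedFDeriv ℝ 2 V q ![EuclideanSpace.single i 1, EuclideanSpace.single j 1]

/-- The third derivative tensor `D³V(q)_{ijk}`. -/
def D3V {d : ℕ} (V : EuclideanSpace ℝ (Fin d) → ℝ) (q : EuclideanSpace ℝ (Fin d))
    (i j k : Fin d) : ℝ :=
  iteratedFDeriv ℝ 3 V q
    ![EuclideanSpace.single i 1, EuclideanSpace.single j 1, EuclideanSpace.single k 1]

/-- The correction potential `V⁽¹⁾(q,Q) = ¼ tr(Q Q^* D²V(q))`. -/
def V1 {d : ℕ} (V : EuclideanSpace ℝ (Fin d) → ℝ) (q : EuclideanSpace ℝ (Fin d))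
    (Q : Matrix (Fin d) (Fin d) ℂ) : ℂ :=
  (1/4 : ℂ) * Matrix.trace (Q * Qᴴ * Matrix.of (fun i j => (D2V V q i j : ℂ)))

/-- The complexified Hessian matrix `D²V(q)`. -/
def D2Vc {d : ℕ} (V : EuclideanSpace ℝ (Fin d) → ℝ) (q : EuclideanSpace ℝ (Fin d)) :
    Matrix (Fin d) (Fin d) ℂ :=
  Matrix.of fun i j => (D2V V q i j : ℂ)

/-- The semiclassical Hamiltonian
`H^ε(q,p,Q,P) = p²/2 + V(q) + (ε/4)(tr(P^*P) + tr(Q Q^* D²V(q)))`. -/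
def Heps (ε : ℝ) {d : ℕ} (V : EuclideanSpace ℝ (Fin d) → ℝ)
    (q p : EuclideanSpace ℝ (Fin d)) (Q P : Matrix (Fin d) (Fin d) ℂ) : ℝ :=
  (∑ i, p i ^ 2) / 2 + V q
    + (ε / 4) * ((Matrix.trace (Pᴴ * P)).re + (Matrix.trace (Q * Qᴴ * D2Vc V q)).re)

/- ------------------- auxiliary lemmas ------------------- -/

private lemma sum3_add' {d : ℕ} (f g : Fin d → Fin d → Fin d → ℂ) :
    ((∑ i, ∑ j, ∑ k, f i j k) + (∑ i, ∑ j, ∑ k, g i j k))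
      = ∑ i, ∑ j, ∑ k, (f i j k + g i j k) := by
  rw [← Finset.sum_add_distrib]
  refine Finset.sum_congr rfl fun i _ => ?_
  rw [← Finset.sum_add_distrib]
  refine Finset.sum_congr rfl fun j _ => ?_
  rw [← Finset.sum_add_distrib]

private lemma cancel_complex (d : ℕ) (A ld : Fin d → Fin d → ℝ)
    (hA : ∀ i j, A i j = A j i) (Qm Pm : Matrix (Fin d) (Fin d) ℂ) :
    (∑ a, ∑ b, ((starRingEnd ℂ) (-∑ m, (A b m : ℂ) * Qm m a) * Pm b a
        + (starRingEnd ℂ) (Pm b a) * (-∑ m, (A b m : ℂ) * Qm m a)))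
    + ∑ i, ∑ j, ∑ k, ((Pm i k * (starRingEnd ℂ) (Qm j k)
          + Qm i k * (starRingEnd ℂ) (Pm j k)) * (A j i : ℂ)
        + Qm i k * (starRingEnd ℂ) (Qm j k) * (ld j i : ℂ))
    = ∑ a, ∑ j, ∑ k, Qm a k * (starRingEnd ℂ) (Qm j k) * (ld j a : ℂ) := by
  have h1 : (∑ a, ∑ b, ((starRingEnd ℂ) (-∑ m, (A b m : ℂ) * Qm m a) * Pm b a
        + (starRingEnd ℂ) (Pm b a) * (-∑ m, (A b m : ℂ) * Qm m a)))
      = ∑ i, ∑ j, ∑ k, (-((A i j : ℂ) * (starRingEnd ℂ) (Qm j k) * Pm i k)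
          + -((starRingEnd ℂ) (Pm i k) * (A i j : ℂ) * Qm j k)) := by
    rw [Finset.sum_comm]
    refine Finset.sum_congr rfl fun i _ => ?_
    have hstep : ∀ a, (starRingEnd ℂ) (-∑ m, (A i m : ℂ) * Qm m a) * Pm i a
        + (starRingEnd ℂ) (Pm i a) * (-∑ m, (A i m : ℂ) * Qm m a)
        = ∑ m, (-((A i m : ℂ) * (starRingEnd ℂ) (Qm m a) * Pm i a)
            + -((starRingEnd ℂ) (Pm i a) * (A i m : ℂ) * Qm m a)) := by
      intro a
      simp only [map_neg, map_sum, map_mul, Complex.conj_ofReal, neg_mul, mul_neg,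
        Finset.sum_mul, Finset.mul_sum, ← Finset.sum_neg_distrib]
      rw [← Finset.sum_add_distrib]
      exact Finset.sum_congr rfl fun m _ => by ring
    rw [Finset.sum_congr rfl fun a _ => hstep a, Finset.sum_comm]
  rw [h1]
  have h2 : ∑ i, ∑ j, ∑ k, ((Pm i k * (starRingEnd ℂ) (Qm j k)
          + Qm i k * (starRingEnd ℂ) (Pm j k)) * (A j i : ℂ)
        + Qm i k * (starRingEnd ℂ) (Qm j k) * (ld j i : ℂ))
      = ∑ i, ∑ j, ∑ k, ((Pm i k * (starRingEnd ℂ) (Qm j k)) * (A j i : ℂ)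
          + ((starRingEnd ℂ) (Pm i k) * (A i j : ℂ) * Qm j k
          + Qm i k * (starRingEnd ℂ) (Qm j k) * (ld j i : ℂ))) := by
    have hswap : (∑ i, ∑ j, ∑ k, Qm i k * (starRingEnd ℂ) (Pm j k) * (A j i : ℂ))
        = ∑ i, ∑ j, ∑ k, (starRingEnd ℂ) (Pm i k) * (A i j : ℂ) * Qm j k := by
      rw [Finset.sum_comm]
      exact Finset.sum_congr rfl fun i _ => Finset.sum_congr rfl fun j _ =>
        Finset.sum_congr rfl fun k _ => by ring
    calc _ = (∑ i, ∑ j, ∑ k, ((Pm i k * (starRingEnd ℂ) (Qm j k)) * (A j i : ℂ)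
              + Qm i k * (starRingEnd ℂ) (Qm j k) * (ld j i : ℂ)))
            + ∑ i, ∑ j, ∑ k, Qm i k * (starRingEnd ℂ) (Pm j k) * (A j i : ℂ) := by
          rw [sum3_add']
          exact Finset.sum_congr rfl fun i _ => Finset.sum_congr rfl fun j _ =>
            Finset.sum_congr rfl fun k _ => by ring
      _ = _ := by
          rw [hswap, sum3_add']
          exact Finset.sum_congr rfl fun i _ => Finset.sum_congr rfl fun j _ =>
            Finset.sum_congr rfl fun k _ => by ring
  rw [h2, sum3_add']
  refine Finset.sum_congr rfl fun i _ => Finset.sum_congr rfl fun j _ =>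
    Finset.sum_congr rfl fun k _ => ?_
  have hij := hA i j
  push_cast [hij]
  ring

private lemma euclid_decomp {d : ℕ} (x : EuclideanSpace ℝ (Fin d)) :
    ∑ i, x i • EuclideanSpace.single i (1:ℝ) = x := by
  ext j
  rw [show ((∑ i, x i • EuclideanSpace.single i (1:ℝ)) j)
      = ∑ i, (x i • EuclideanSpace.single i (1:ℝ)) j from by rw [WithLp.ofLp_sum]; exact Finset.sum_apply j Finset.univ _]
  simp [EuclideanSpace.single_apply]

private lemma trace_mul_expand {d : ℕ} (B M : Matrix (Fin d) (Fin d) ℂ) :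
    Matrix.trace (B * M) = ∑ a, ∑ j, B a j * M j a := by
  simp [Matrix.trace, Matrix.diag, Matrix.mul_apply]

private lemma V1_re_eq {d : ℕ} (V : EuclideanSpace ℝ (Fin d) → ℝ)
    (x : EuclideanSpace ℝ (Fin d)) (Qm : Matrix (Fin d) (Fin d) ℂ) :
    (V1 V x Qm).re = (1/4) * ∑ a, ∑ j, ((Qm * Qmᴴ) a j).re * D2V V x j a := by
  rw [V1, trace_mul_expand]
  rw [show (1/4 : ℂ) = ((1/4 : ℝ) : ℂ) by norm_num]
  rw [Complex.re_ofReal_mul]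
  congr 1
  rw [Complex.re_sum]
  refine Finset.sum_congr rfl fun a _ => ?_
  rw [Complex.re_sum]
  refine Finset.sum_congr rfl fun j _ => ?_
  simp [Complex.mul_re]

private lemma trace_PhP_re {d : ℕ} (P : Matrix (Fin d) (Fin d) ℂ) :
    (Matrix.trace (Pᴴ * P)).re = ∑ a, ∑ b, ((starRingEnd ℂ) (P b a) * P b a).re := by
  simp [Matrix.trace, Matrix.diag, Matrix.mul_apply, Complex.re_sum, Matrix.conjTranspose_apply]

private lemma trace_QQh_re {d : ℕ} (V : EuclideanSpace ℝ (Fin d) → ℝ)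
    (x : EuclideanSpace ℝ (Fin d)) (Qm : Matrix (Fin d) (Fin d) ℂ) :
    (Matrix.trace (Qm * Qmᴴ * D2Vc V x)).re
      = ∑ i, ∑ j, ∑ k, (Qm i k * (starRingEnd ℂ) (Qm j k) * ((D2V V x j i : ℝ) : ℂ)).re := by
  simp [Matrix.trace, Matrix.diag, Matrix.mul_apply, Complex.re_sum, Matrix.conjTranspose_apply,
    D2Vc, Finset.sum_mul]

/-- the Hamiltonian `H^ε` is conserved along solutions of the corrected
symplectic Gaussian wave packet equations. -/
theorem Heps_conserved (d : ℕ) (ε : ℝ) (hε : 0 < ε)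
    (V : EuclideanSpace ℝ (Fin d) → ℝ) (hV : ContDiff ℝ 3 V)
    (q p : ℝ → EuclideanSpace ℝ (Fin d)) (Q P : ℝ → Matrix (Fin d) (Fin d) ℂ)
    (hq : ∀ t (i : Fin d), HasDerivAt (fun s => q s i) (p t i) t)
    (hp : ∀ t (i : Fin d), HasDerivAt (fun s => p s i)
      (-(fderiv ℝ (fun q' => V q' + ε * (V1 V q' (Q t)).re) (q t)
          (EuclideanSpace.single i 1))) t)
    (hQ : ∀ t (a b : Fin d), HasDerivAt (fun s => Q s a b) (P t a b) t)
    (hP : ∀ t (a b : Fin d), HasDerivAt (fun s => P s a b)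
      ((-(D2Vc V (q t) * Q t)) a b) t) :
    ∀ t : ℝ, Heps ε V (q t) (p t) (Q t) (P t) = Heps ε V (q 0) (p 0) (Q 0) (P 0) := by
  have hVd : Differentiable ℝ V := hV.differentiable (by norm_num)
  have hD2d : ∀ i j : Fin d, Differentiable ℝ (fun q' => D2V V q' i j) := by
    intro i j
    have h2 : ContDiff ℝ 1 (iteratedFDeriv ℝ 2 V) := hV.iteratedFDeriv_right (by norm_num)
    exact ((ContinuousMultilinearMap.apply ℝ (fun _ : Fin 2 => EuclideanSpace ℝ (Fin d)) ℝ
      ![EuclideanSpace.single i 1, EuclideanSpace.single j 1]).contDiff.comp h2).differentiable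
      one_ne_zero
  have hsym : ∀ (x : EuclideanSpace ℝ (Fin d)) (i j : Fin d), D2V V x i j = D2V V x j i := by
    intro x i j
    unfold D2V
    rw [iteratedFDeriv_two_apply, iteratedFDeriv_two_apply]
    have h := hV.contDiffAt.isSymmSndFDerivAt (n := 3) (x := x) (by norm_num)
    simpa using h _ _
  have Heq : (fun s => Heps ε V (q s) (p s) (Q s) (P s)) = fun s =>
      (∑ i, p s i ^ 2) / 2 + V (q s)
        + ε / 4 * ((∑ a, ∑ b, ((starRingEnd ℂ) (P s b a) * P s b a).re)
          + ∑ i, ∑ j, ∑ k, (Q s i k * (starRingEnd ℂ) (Q s j k)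
              * ((D2V V (q s) j i : ℝ) : ℂ)).re) := by
    funext s
    rw [Heps, trace_PhP_re, trace_QQh_re]
  suffices hkey : ∀ t, HasDerivAt (fun s => Heps ε V (q s) (p s) (Q s) (P s)) 0 t by
    intro t
    exact is_const_of_deriv_eq_zero (fun s => (hkey s).differentiableAt)
      (fun s => (hkey s).deriv) t 0
  intro t
  rw [Heq]
  have hqE : HasDerivAt q (p t) t := by
    have h : HasDerivAt (fun s (i : Fin d) => q s i) (fun i => p t i) t :=
      hasDerivAt_pi.mpr (fun i => hq t i)
    exact ((PiLp.continuousLinearEquiv 2 ℝ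
      (fun _ : Fin d => ℝ)).symm.toContinuousLinearMap.hasFDerivAt).comp_hasDerivAt t h
  have hDt : ∀ i j : Fin d, HasDerivAt (fun s => D2V V (q s) i j)
      (fderiv ℝ (fun q' => D2V V q' i j) (q t) (p t)) t := fun i j =>
    ((hD2d i j (q t)).hasFDerivAt).comp_hasDerivAt t hqE
  have h1 : HasDerivAt (fun s => (∑ i, p s i ^ 2) / 2)
      ((∑ i, ((2 : ℕ) : ℝ) * p t i ^ (2 - 1)
        * (-(fderiv ℝ (fun q' => V q' + ε * (V1 V q' (Q t)).re) (q t)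
            (EuclideanSpace.single i 1)))) / 2) t :=
    (HasDerivAt.fun_sum fun i _ => (hp t i).pow 2).div_const 2
  have h2 : HasDerivAt (fun s => V (q s)) (fderiv ℝ V (q t) (p t)) t :=
    (hVd (q t)).hasFDerivAt.comp_hasDerivAt t hqE
  have h3 : HasDerivAt (fun s => ∑ a, ∑ b, ((starRingEnd ℂ) (P s b a) * P s b a).re)
      (∑ a, ∑ b, ((starRingEnd ℂ) ((-(D2Vc V (q t) * Q t)) b a) * P t b a
        + (starRingEnd ℂ) (P t b a) * (-(D2Vc V (q t) * Q t)) b a).re) t := by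
    refine HasDerivAt.fun_sum fun a _ => HasDerivAt.fun_sum fun b _ => ?_
    have hstar : HasDerivAt (fun s => (starRingEnd ℂ) (P s b a))
        ((starRingEnd ℂ) ((-(D2Vc V (q t) * Q t)) b a)) t := by
      simpa [Complex.star_def] using (hP t b a).star
    exact Complex.reCLM.hasFDerivAt.comp_hasDerivAt t (hstar.mul (hP t b a))
  have h4 : HasDerivAt (fun s => ∑ i, ∑ j, ∑ k, (Q s i k * (starRingEnd ℂ) (Q s j k)
        * ((D2V V (q s) j i : ℝ) : ℂ)).re)
      (∑ i, ∑ j, ∑ k, ((P t i k * (starRingEnd ℂ) (Q t j k)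
          + Q t i k * (starRingEnd ℂ) (P t j k)) * ((D2V V (q t) j i : ℝ) : ℂ)
        + Q t i k * (starRingEnd ℂ) (Q t j k)
          * ((fderiv ℝ (fun q' => D2V V q' j i) (q t) (p t) : ℝ) : ℂ)).re) t := by
    refine HasDerivAt.fun_sum fun i _ => HasDerivAt.fun_sum fun j _ => HasDerivAt.fun_sum fun k _ => ?_
    have hstar : HasDerivAt (fun s => (starRingEnd ℂ) (Q s j k)) ((starRingEnd ℂ) (P t j k)) t := by
      simpa [Complex.star_def] using (hQ t j k).star
    have hre : HasDerivAt (fun s => ((D2V V (q s) j i : ℝ) : ℂ))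
        ((fderiv ℝ (fun q' => D2V V q' j i) (q t) (p t) : ℂ)) t :=
      Complex.ofRealCLM.hasFDerivAt.comp_hasDerivAt t (hDt j i)
    exact Complex.reCLM.hasFDerivAt.comp_hasDerivAt t (((hQ t i k).mul hstar).mul hre)
  have hH := (h1.add h2).add (HasDerivAt.const_mul (ε/4) (h3.add h4))
  convert hH using 1
  case e'_4 => rfl
  case e'_5 => rfl
  case e'_8 => rfl
  -- It remains to show the total derivative vanishes.
  have hWsum : HasFDerivAt (fun x => ∑ a, ∑ j, ((Q t * (Q t)ᴴ) a j).re * D2V V x j a)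
      (∑ a, ∑ j, ((Q t * (Q t)ᴴ) a j).re • fderiv ℝ (fun q' => D2V V q' j a) (q t)) (q t) :=
    HasFDerivAt.fun_sum fun a _ => HasFDerivAt.fun_sum fun j _ =>
      ((hD2d j a (q t)).hasFDerivAt).const_mul _
  have hW : HasFDerivAt (fun x => (V1 V x (Q t)).re)
      ((1/4 : ℝ) • ∑ a, ∑ j, ((Q t * (Q t)ᴴ) a j).re
        • fderiv ℝ (fun q' => D2V V q' j a) (q t)) (q t) := by
    have hfun : (fun x => (V1 V x (Q t)).re)
        = fun x => (1/4) * ∑ a, ∑ j, ((Q t * (Q t)ᴴ) a j).re * D2V V x j a :=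
      funext fun x => V1_re_eq V x (Q t)
    rw [hfun]
    exact hWsum.const_mul _
  have hg : HasFDerivAt (fun x => V x + ε * (V1 V x (Q t)).re)
      (fderiv ℝ V (q t) + ε • ((1/4:ℝ) • ∑ a, ∑ j, ((Q t * (Q t)ᴴ) a j).re
        • fderiv ℝ (fun q' => D2V V q' j a) (q t))) (q t) :=
    ((hVd (q t)).hasFDerivAt).add (hW.const_mul ε)
  rw [hg.fderiv]
  set Ψ := fderiv ℝ V (q t) + ε • ((1/4:ℝ) • ∑ a, ∑ j, ((Q t * (Q t)ᴴ) a j).re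
      • fderiv ℝ (fun q' => D2V V q' j a) (q t)) with hΨdef
  have hclm : ∀ L : EuclideanSpace ℝ (Fin d) →L[ℝ] ℝ,
      ∑ i, p t i * L (EuclideanSpace.single i 1) = L (p t) := by
    intro L
    calc ∑ i, p t i * L (EuclideanSpace.single i 1)
        = ∑ i, L (p t i • EuclideanSpace.single i 1) := by simp
      _ = L (∑ i, p t i • EuclideanSpace.single i 1) := (map_sum L _ _).symm
      _ = L (p t) := by rw [euclid_decomp]
  have hsum1 : (∑ i, ((2:ℕ):ℝ) * p t i ^ (2-1) * (-(Ψ (EuclideanSpace.single i 1))))/2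
      = -(Ψ (p t)) := by
    calc (∑ i, ((2:ℕ):ℝ) * p t i ^ (2-1) * (-(Ψ (EuclideanSpace.single i 1))))/2
        = ((-2) * ∑ i, p t i * Ψ (EuclideanSpace.single i 1))/2 := by
          rw [Finset.mul_sum]
          congr 1
          exact Finset.sum_congr rfl fun i _ => by push_cast; ring
      _ = -(Ψ (p t)) := by rw [hclm Ψ]; ring
  rw [hsum1]
  have hΨpt : Ψ (p t) = fderiv ℝ V (q t) (p t)
      + ε * ((1/4) * ∑ a, ∑ j, ((Q t * (Q t)ᴴ) a j).re
        * fderiv ℝ (fun q' => D2V V q' j a) (q t) (p t)) := by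
    rw [hΨdef]
    simp [ContinuousLinearMap.sum_apply, ContinuousLinearMap.smul_apply,
      ContinuousLinearMap.add_apply, smul_eq_mul]
  rw [hΨpt]
  have hmulre : ∀ (z : ℂ) (r : ℝ), (z * (r:ℂ)).re = z.re * r := fun z r => by
    simp [Complex.mul_re]
  have hss : (∑ a, ∑ b, ((starRingEnd ℂ) ((-(D2Vc V (q t) * Q t)) b a) * P t b a
        + (starRingEnd ℂ) (P t b a) * (-(D2Vc V (q t) * Q t)) b a).re)
      + (∑ i, ∑ j, ∑ k, ((P t i k * (starRingEnd ℂ) (Q t j k)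
          + Q t i k * (starRingEnd ℂ) (P t j k)) * ((D2V V (q t) j i : ℝ) : ℂ)
        + Q t i k * (starRingEnd ℂ) (Q t j k)
          * ((fderiv ℝ (fun q' => D2V V q' j i) (q t) (p t) : ℝ) : ℂ)).re)
      = ∑ a, ∑ j, ((Q t * (Q t)ᴴ) a j).re
          * fderiv ℝ (fun q' => D2V V q' j a) (q t) (p t) := by
    have hC := cancel_complex d (fun x y => D2V V (q t) x y)
      (fun x y => fderiv ℝ (fun q' => D2V V q' x y) (q t) (p t))
      (fun i j => hsym (q t) i j) (Q t) (P t)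
    have hPdot : ∀ b a : Fin d, (-(D2Vc V (q t) * Q t)) b a
        = -∑ m, ((D2V V (q t) b m : ℝ):ℂ) * Q t m a := by
      intro b a
      simp [Matrix.neg_apply, Matrix.mul_apply, D2Vc]
    have hT : ∀ a j : Fin d, ((Q t * (Q t)ᴴ) a j).re
          * fderiv ℝ (fun q' => D2V V q' j a) (q t) (p t)
        = ∑ k, (Q t a k * (starRingEnd ℂ) (Q t j k)
            * ((fderiv ℝ (fun q' => D2V V q' j a) (q t) (p t) : ℝ):ℂ)).re := by
      intro a j
      simp [Matrix.mul_apply, Matrix.conjTranspose_apply, Complex.re_sum, Finset.sum_mul, hmulre]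
    have hL : (∑ a, ∑ b, ((starRingEnd ℂ) ((-(D2Vc V (q t) * Q t)) b a) * P t b a
          + (starRingEnd ℂ) (P t b a) * (-(D2Vc V (q t) * Q t)) b a).re)
        + (∑ i, ∑ j, ∑ k, ((P t i k * (starRingEnd ℂ) (Q t j k)
            + Q t i k * (starRingEnd ℂ) (P t j k)) * ((D2V V (q t) j i : ℝ) : ℂ)
          + Q t i k * (starRingEnd ℂ) (Q t j k)
            * ((fderiv ℝ (fun q' => D2V V q' j i) (q t) (p t) : ℝ) : ℂ)).re)
        = ((∑ a, ∑ b, ((starRingEnd ℂ) (-∑ m, ((D2V V (q t) b m : ℝ) : ℂ) * Q t m a) * P t b a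
            + (starRingEnd ℂ) (P t b a) * (-∑ m, ((D2V V (q t) b m : ℝ) : ℂ) * Q t m a)))
          + ∑ i, ∑ j, ∑ k, ((P t i k * (starRingEnd ℂ) (Q t j k)
              + Q t i k * (starRingEnd ℂ) (P t j k)) * ((D2V V (q t) j i : ℝ) : ℂ)
            + Q t i k * (starRingEnd ℂ) (Q t j k)
              * ((fderiv ℝ (fun q' => D2V V q' j i) (q t) (p t) : ℝ) : ℂ))).re := by
      simp only [hPdot, ← Complex.re_sum, ← Complex.add_re]
    rw [hL, hC]
    simp only [Complex.re_sum]
    exact Finset.sum_congr rfl fun a _ => Finset.sum_congr rfl fun j _ => (hT a j).symm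
  rw [hss]
  ring

end
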